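/- A permutation w ∈ S_n avoids both 321 and 3412 if and only if every reduced expression for w contains each simple transposition s_a at most once. -/

import Mathlib

open Equiv Finset
open scoped Classical

/-- Bruhat order on the symmetric group on `Fin n`, via the rank-matrix
characterization: `v ≤ w` iff every northeast corner count of `v` is at most
that of `w`. -/
def bruhatLE {n : ℕ} (v w : Equiv.Perm (Fin n)) : Prop :=
  ∀ i j : Fin n,
    (Finset.univ.filter fun k => k ≤ i ∧ j ≤ v k).card ≤
      (Finset.univ.filter fun k => k ≤ i ∧ j ≤ w k).card

/-- Coxeter length = number of inversions. -/
def len {n : ℕ} (v : Equiv.Perm (Fin n)) : ℕ :=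
  (Finset.univ.filter fun p : Fin n × Fin n => p.1 < p.2 ∧ v p.2 < v p.1).card

/-- The graph of the Bruhat interval `[v, w]`. -/
def grInt {n : ℕ} (v w : Equiv.Perm (Fin n)) : Set (Fin n × Fin n) :=
  {p | ∃ u : Equiv.Perm (Fin n), bruhatLE v u ∧ bruhatLE u w ∧ u p.1 = p.2}

def avoids321 {n : ℕ} (v : Equiv.Perm (Fin n)) : Prop :=
  ¬ ∃ a b c : Fin n, a < b ∧ b < c ∧ v c < v b ∧ v b < v a

def avoids3412 {n : ℕ} (v : Equiv.Perm (Fin n)) : Prop :=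
  ¬ ∃ a b c d : Fin n, a < b ∧ b < c ∧ c < d ∧ v c < v d ∧ v d < v a ∧ v a < v b

/-- `s` is a simple transposition (adjacent swap). -/
def IsSimple {n : ℕ} (s : Equiv.Perm (Fin n)) : Prop :=
  ∃ (i : Fin n) (h : (i : ℕ) + 1 < n), s = Equiv.swap i ⟨(i : ℕ) + 1, h⟩


lemma swap_lt_iff {n : ℕ} (b b1 : Fin n) (hb : (b1 : ℕ) = (b : ℕ) + 1)
    (m1 m2 : Fin n) (h1 : ¬(m1 = b ∧ m2 = b1)) (h2 : ¬(m2 = b ∧ m1 = b1)) :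
    (Equiv.swap b b1 m1 < Equiv.swap b b1 m2 ↔ m1 < m2) := by
  simp only [Equiv.swap_apply_def]
  split_ifs <;> simp only [Fin.lt_def] <;>
    (try simp only [Fin.ext_iff, not_and] at h1 h2 ⊢) <;> omega

lemma len_swap_mul {n : ℕ} (v : Perm (Fin n)) (b b1 : Fin n) (hb : (b1:ℕ) = (b:ℕ)+1)
    (hq : v.symm b < v.symm b1) :
    len (Equiv.swap b b1 * v) = len v + 1 := by
  set s := Equiv.swap b b1 with hs
  set pt : Fin n × Fin n := (v.symm b, v.symm b1) with hpt
  have hbb1 : b < b1 := by rw [Fin.lt_def]; omega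
  have hsb : s b = b1 := Equiv.swap_apply_left _ _
  have hsb1 : s b1 = b := Equiv.swap_apply_right _ _
  have hF' : (univ.filter fun p : Fin n × Fin n => p.1 < p.2 ∧ (s * v) p.2 < (s * v) p.1)
      = insert pt (univ.filter fun p : Fin n × Fin n => p.1 < p.2 ∧ v p.2 < v p.1) := by
    ext ⟨x, y⟩
    simp only [mem_filter, mem_univ, true_and, mem_insert]
    simp only [Perm.mul_apply]
    constructor
    · rintro ⟨hxy, hinv⟩
      by_cases hxpt : (x, y) = pt
      · exact Or.inl hxpt
      · refine Or.inr ⟨hxy, ?_⟩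
        rw [swap_lt_iff b b1 hb (v y) (v x) ?_ ?_] at hinv
        · exact hinv
        · rintro ⟨hy, hx⟩
          have hy' : y = v.symm b := by rw [← hy]; simp
          have hx' : x = v.symm b1 := by rw [← hx]; simp
          rw [hy', hx'] at hxy
          exact absurd hq (not_lt.2 (le_of_lt hxy))
        · rintro ⟨hx, hy⟩
          apply hxpt
          have hx' : x = v.symm b := by rw [← hx]; simp
          have hy' : y = v.symm b1 := by rw [← hy]; simp
          rw [hpt, hx', hy']
    · rintro (hxpt | ⟨hxy, hinv⟩)
      · rw [hpt, Prod.ext_iff] at hxpt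
        obtain ⟨hx, hy⟩ := hxpt
        subst hx; subst hy
        refine ⟨hq, ?_⟩
        simp only [Equiv.apply_symm_apply, hsb, hsb1]
        exact hbb1
      · refine ⟨hxy, ?_⟩
        rw [swap_lt_iff b b1 hb (v y) (v x) ?_ ?_]
        · exact hinv
        · rintro ⟨hy, hx⟩
          have hy' : y = v.symm b := by rw [← hy]; simp
          have hx' : x = v.symm b1 := by rw [← hx]; simp
          rw [hy', hx'] at hxy
          exact absurd hq (not_lt.2 (le_of_lt hxy))
        · rintro ⟨hx, hy⟩
          rw [hx, hy] at hinv
          exact absurd hinv (not_lt.2 (le_of_lt hbb1))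
  have hptnot : pt ∉ (univ.filter fun p : Fin n × Fin n => p.1 < p.2 ∧ v p.2 < v p.1) := by
    simp only [mem_filter, mem_univ, true_and, hpt]
    rintro ⟨-, hlt⟩
    simp only [Equiv.apply_symm_apply] at hlt
    exact absurd hlt (not_lt.2 (le_of_lt hbb1))
  rw [len, len, hF', Finset.card_insert_of_notMem hptnot]

lemma len_swap_mul' {n : ℕ} (v : Perm (Fin n)) (b b1 : Fin n) (hb : (b1:ℕ) = (b:ℕ)+1)
    (hq : v.symm b1 < v.symm b) :
    len v = len (Equiv.swap b b1 * v) + 1 := by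
  set s := Equiv.swap b b1 with hs
  have h1 : (s * v).symm b = v.symm b1 := by
    rw [Equiv.symm_apply_eq]
    simp [Perm.mul_apply, hs]
  have h2 : (s * v).symm b1 = v.symm b := by
    rw [Equiv.symm_apply_eq]
    simp [Perm.mul_apply, hs]
  have key := len_swap_mul (s * v) b b1 hb (by rw [h1, h2]; exact hq)
  rwa [hs, Equiv.swap_mul_self_mul] at key

lemma len_swap_le {n : ℕ} (v : Perm (Fin n)) (b b1 : Fin n) (hb : (b1:ℕ) = (b:ℕ)+1) :
    len (Equiv.swap b b1 * v) ≤ len v + 1 ∧ len v ≤ len (Equiv.swap b b1 * v) + 1 := by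
  have hne : v.symm b ≠ v.symm b1 := by
    intro h
    have := v.symm.injective h
    rw [Fin.ext_iff] at this; omega
  rcases lt_or_gt_of_ne hne with h | h
  · rw [len_swap_mul v b b1 hb h]; omega
  · rw [len_swap_mul' v b b1 hb h]; omega

lemma len_one {n : ℕ} : len (1 : Perm (Fin n)) = 0 := by
  rw [len, Finset.card_eq_zero]
  ext ⟨x, y⟩
  simp only [mem_filter, mem_univ, true_and, notMem_empty, iff_false, not_and]
  simp only [Perm.one_apply]
  exact fun h1 h2 => absurd h2 (not_lt.2 h1.le)

lemma len_prod_le {n : ℕ} : ∀ l : List (Perm (Fin n)), (∀ s ∈ l, IsSimple s) →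
    len l.prod ≤ l.length := by
  intro l
  induction l with
  | nil => intro _; simp [len_one]
  | cons s rest ih =>
    intro h
    obtain ⟨b, hbn, rfl⟩ := h s (List.mem_cons_self)
    have h1 := (len_swap_le rest.prod b ⟨(b:ℕ)+1, hbn⟩ rfl).1
    have h2 := ih (fun t ht => h t (List.mem_cons_of_mem _ ht))
    simp only [List.prod_cons, List.length_cons]
    omega

lemma sm_le {n : ℕ} (f : Fin n → Fin n) (hf : StrictMono f) : ∀ x : Fin n, (x:ℕ) ≤ (f x : ℕ) := by
  have key : ∀ k (x : Fin n), (x:ℕ) = k → (x:ℕ) ≤ (f x : ℕ) := by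
    intro k
    induction k with
    | zero => intro x hx; omega
    | succ k ih =>
      intro x hx
      have hk : k < n := by omega
      have hyx : (⟨k, hk⟩ : Fin n) < x := by rw [Fin.lt_def]; simp; omega
      have h1 := hf hyx
      have h2 := ih ⟨k, hk⟩ rfl
      rw [Fin.lt_def] at h1
      simp at h2
      omega
  exact fun x => key _ x rfl

lemma sm_perm_eq_one {n : ℕ} (u : Perm (Fin n)) (hu : StrictMono ⇑u) : u = 1 := by
  have hsm : StrictMono ⇑u.symm := by
    intro x y hxy
    by_contra h
    push_neg at h
    have := hu.le_iff_le.mpr h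
    simp only [Equiv.apply_symm_apply] at this
    exact absurd hxy (not_lt.2 this)
  apply Equiv.ext
  intro x
  have h1 := sm_le _ hu x
  have h2 := sm_le _ hsm (u x)
  simp only [Equiv.symm_apply_apply] at h2
  simp only [Perm.one_apply]
  rw [Fin.ext_iff]; omega

lemma len_eq_zero {n : ℕ} (v : Perm (Fin n)) (h : len v = 0) : v = 1 := by
  rw [len, Finset.card_eq_zero] at h
  apply sm_perm_eq_one
  intro x y hxy
  have hmem := Finset.eq_empty_iff_forall_notMem.mp h (x, y)
  simp only [mem_filter, mem_univ, true_and, not_and] at hmem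
  have h1 : ¬ (v y < v x) := hmem hxy
  exact lt_of_le_of_ne (not_lt.1 h1) (fun he => absurd (v.injective he) (ne_of_lt hxy))

lemma exists_descent {n : ℕ} (v : Perm (Fin n)) (h : v ≠ 1) :
    ∃ (b : Fin n) (hb : (b:ℕ)+1 < n), v.symm ⟨(b:ℕ)+1, hb⟩ < v.symm b := by
  by_contra hno
  push_neg at hno
  have step : ∀ (b : Fin n) (hb : (b:ℕ)+1 < n), v.symm b ≤ v.symm ⟨(b:ℕ)+1, hb⟩ :=
    fun b hb => hno b hb
  have chain : ∀ k (x : Fin n) (hk : (x:ℕ)+k < n), v.symm x ≤ v.symm ⟨(x:ℕ)+k, hk⟩ := by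
    intro k
    induction k with
    | zero =>
      intro x hk
      have hx : (⟨(x:ℕ)+0, hk⟩ : Fin n) = x := by ext; simp
      rw [hx]
    | succ k ih =>
      intro x hk
      have hk' : (x:ℕ)+k < n := by omega
      refine le_trans (ih x hk') ?_
      have hstep := step ⟨(x:ℕ)+k, hk'⟩ (by omega)
      have he : (⟨((⟨(x:ℕ)+k, hk'⟩ : Fin n) : ℕ)+1, by omega⟩ : Fin n)
          = ⟨(x:ℕ)+(k+1), hk⟩ := by ext; simp; omega
      rwa [he] at hstep
  have hsm : StrictMono ⇑v.symm := by
    intro x y hxy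
    have hxy' := Fin.lt_def.mp hxy
    have hk : (x:ℕ) + ((y:ℕ) - (x:ℕ)) < n := by omega
    have hc := chain ((y:ℕ)-(x:ℕ)) x hk
    have hy : (⟨(x:ℕ)+((y:ℕ)-(x:ℕ)), hk⟩ : Fin n) = y := by ext; simp; omega
    rw [hy] at hc
    exact lt_of_le_of_ne hc (fun he => absurd (v.symm.injective he) (ne_of_lt hxy))
  have := sm_perm_eq_one _ hsm
  apply h
  have : v = (v.symm).symm := rfl
  rw [this, sm_perm_eq_one _ hsm]
  rfl

lemma exists_reduced {n : ℕ} : ∀ (k : ℕ) (w : Perm (Fin n)), len w ≤ k →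
    ∃ l : List (Perm (Fin n)), (∀ s ∈ l, IsSimple s) ∧ l.prod = w ∧ l.length = len w := by
  intro k
  induction k with
  | zero =>
    intro w hw
    have h0 : len w = 0 := by omega
    rw [len_eq_zero w h0]
    exact ⟨[], by simp, by simp, by simp [len_one, h0]⟩
  | succ k ih =>
    intro w hw
    by_cases h1 : w = 1
    · subst h1
      exact ⟨[], by simp, by simp, by simp [len_one]⟩
    · obtain ⟨b, hb, hdes⟩ := exists_descent w h1
      have hlen : len w = len (Equiv.swap b ⟨(b:ℕ)+1, hb⟩ * w) + 1 :=
        len_swap_mul' w b ⟨(b:ℕ)+1, hb⟩ rfl hdes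
      obtain ⟨l', hl1, hl2, hl3⟩ := ih (Equiv.swap b ⟨(b:ℕ)+1, hb⟩ * w) (by omega)
      refine ⟨Equiv.swap b ⟨(b:ℕ)+1, hb⟩ :: l', ?_, ?_, ?_⟩
      · intro s hs
        rcases List.mem_cons.mp hs with rfl | hs'
        · exact ⟨b, hb, rfl⟩
        · exact hl1 s hs'
      · rw [List.prod_cons, hl2, Equiv.swap_mul_self_mul]
      · rw [List.length_cons, hl3]; omega

noncomputable def occC {n : ℕ} (j : ℕ) (l : List (Perm (Fin n))) : ℕ :=
  l.countP fun t => decide (∃ h : j + 1 < n, t = Equiv.swap ⟨j, Nat.lt_of_succ_lt h⟩ ⟨j+1, h⟩)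

def Dst {n : ℕ} (j : ℕ) (v : Perm (Fin n)) : ℕ :=
  (Finset.univ.filter fun p : Fin n => (p:ℕ) ≤ j ∧ j < (v p : ℕ)).card

lemma Dst_one {n : ℕ} (j : ℕ) : Dst j (1 : Perm (Fin n)) = 0 := by
  rw [Dst, Finset.card_eq_zero]
  ext p
  simp only [mem_filter, mem_univ, true_and, notMem_empty, iff_false, not_and]
  simp only [Perm.one_apply]
  omega

lemma swap_val_gt {n : ℕ} (b b1 : Fin n) (hb : (b1:ℕ) = (b:ℕ)+1) (j : ℕ) (hj : (b:ℕ) ≠ j)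
    (x : Fin n) : j < ((Equiv.swap b b1 x : Fin n) : ℕ) ↔ j < (x:ℕ) := by
  rcases eq_or_ne x b with rfl | hxb
  · rw [Equiv.swap_apply_left]; omega
  rcases eq_or_ne x b1 with rfl | hxb1
  · rw [Equiv.swap_apply_right]; omega
  · rw [Equiv.swap_apply_of_ne_of_ne hxb hxb1]

lemma Dst_swap_ne {n : ℕ} (b b1 : Fin n) (hb : (b1:ℕ) = (b:ℕ)+1) (j : ℕ) (hj : (b:ℕ) ≠ j)
    (v : Perm (Fin n)) : Dst j (Equiv.swap b b1 * v) = Dst j v := by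
  rw [Dst, Dst]
  congr 1
  ext p
  simp only [mem_filter, mem_univ, true_and]
  simp only [Perm.mul_apply]
  rw [swap_val_gt b b1 hb j hj (v p)]

lemma Dst_swap_self {n : ℕ} (b : Fin n) (hbn : (b:ℕ)+1 < n) (v : Perm (Fin n)) :
    Dst (b:ℕ) (Equiv.swap b ⟨(b:ℕ)+1, hbn⟩ * v) ≤ Dst (b:ℕ) v + 1 := by
  set b1 : Fin n := ⟨(b:ℕ)+1, hbn⟩ with hb1
  have hsub : (univ.filter fun p : Fin n => (p:ℕ) ≤ (b:ℕ) ∧ (b:ℕ) < ((Equiv.swap b b1 * v) p : ℕ))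
      ⊆ insert (v.symm b) (univ.filter fun p : Fin n => (p:ℕ) ≤ (b:ℕ) ∧ (b:ℕ) < (v p : ℕ)) := by
    intro p hp
    simp only [mem_filter, mem_univ, true_and] at hp
    simp only [Perm.mul_apply] at hp
    obtain ⟨hp1, hp2⟩ := hp
    rcases eq_or_ne (v p) b with hvb | hvb
    · have : p = v.symm b := by rw [Equiv.eq_symm_apply]; exact hvb
      exact mem_insert.2 (Or.inl this)
    rcases eq_or_ne (v p) b1 with hvb1 | hvb1
    · rw [hvb1, Equiv.swap_apply_right] at hp2; omega
    · rw [Equiv.swap_apply_of_ne_of_ne hvb hvb1] at hp2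
      exact mem_insert.2 (Or.inr (by simp only [mem_filter, mem_univ, true_and]; exact ⟨hp1, hp2⟩))
  calc (univ.filter fun p : Fin n => (p:ℕ) ≤ (b:ℕ) ∧ (b:ℕ) < ((Equiv.swap b b1 * v) p : ℕ)).card
      ≤ (insert (v.symm b) (univ.filter fun p : Fin n => (p:ℕ) ≤ (b:ℕ) ∧ (b:ℕ) < (v p : ℕ))).card :=
        Finset.card_le_card hsub
    _ ≤ _ + 1 := Finset.card_insert_le _ _

lemma occ_pred_iff {n : ℕ} (b : Fin n) (hbn : (b:ℕ)+1 < n) (j : ℕ) :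
    (∃ h : j + 1 < n, Equiv.swap b ⟨(b:ℕ)+1, hbn⟩ = Equiv.swap ⟨j, Nat.lt_of_succ_lt h⟩ ⟨j+1, h⟩)
      ↔ j = (b:ℕ) := by
  constructor
  · rintro ⟨h, heq⟩
    have hb := congrArg (fun u : Perm (Fin n) => u b) heq
    simp only [Equiv.swap_apply_left] at hb
    rw [Equiv.swap_apply_def] at hb
    split_ifs at hb <;> simp only [Fin.ext_iff] at * <;> omega
  · rintro rfl
    refine ⟨hbn, ?_⟩
    congr 1

lemma occ_cons {n : ℕ} (j : ℕ) (s : Perm (Fin n)) (l : List (Perm (Fin n))) :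
    occC j (s :: l) = occC j l +
      (if (∃ h : j + 1 < n, s = Equiv.swap ⟨j, Nat.lt_of_succ_lt h⟩ ⟨j+1, h⟩) then 1 else 0) := by
  rw [occC, occC, List.countP_cons]
  congr 1
  simp only [decide_eq_true_eq]

lemma Dst_le_occ {n : ℕ} : ∀ l : List (Perm (Fin n)), (∀ s ∈ l, IsSimple s) → ∀ j : ℕ,
    Dst j l.prod ≤ occC j l := by
  intro l
  induction l with
  | nil => intro _ j; simp [List.prod_nil, Dst_one, occC]
  | cons s rest ih =>
    intro h j
    obtain ⟨b, hbn, rfl⟩ := h s (List.mem_cons_self)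
    have ih' := ih (fun t ht => h t (List.mem_cons_of_mem _ ht)) j
    rw [List.prod_cons, occ_cons]
    by_cases hj : (b:ℕ) = j
    · subst hj
      have h1 := Dst_swap_self b hbn rest.prod
      have h2 : (∃ h : (b:ℕ) + 1 < n, Equiv.swap b ⟨(b:ℕ)+1, hbn⟩
          = Equiv.swap ⟨(b:ℕ), Nat.lt_of_succ_lt h⟩ ⟨(b:ℕ)+1, h⟩) := (occ_pred_iff b hbn _).2 rfl
      rw [if_pos h2]
      omega
    · rw [Dst_swap_ne b ⟨(b:ℕ)+1, hbn⟩ rfl j hj]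
      omega

lemma sum_occ {n : ℕ} : ∀ l : List (Perm (Fin n)), (∀ s ∈ l, IsSimple s) →
    ∑ j ∈ Finset.range n, occC j l = l.length := by
  intro l
  induction l with
  | nil => simp [occC]
  | cons s rest ih =>
    intro h
    obtain ⟨b, hbn, rfl⟩ := h s (List.mem_cons_self)
    have ih' := ih (fun t ht => h t (List.mem_cons_of_mem _ ht))
    have hocc : ∀ j, occC j (Equiv.swap b ⟨(b:ℕ)+1, hbn⟩ :: rest)
        = occC j rest + (if j = (b:ℕ) then 1 else 0) := by
      intro j
      rw [occ_cons]
      congr 1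
      by_cases hj : j = (b:ℕ)
      · rw [if_pos hj, if_pos ((occ_pred_iff b hbn j).2 hj)]
      · rw [if_neg hj, if_neg (fun hh => hj ((occ_pred_iff b hbn j).1 hh))]
    simp only [hocc]
    rw [Finset.sum_add_distrib, ih', Finset.sum_ite_eq' (Finset.range n) ((b:ℕ)) (fun _ => 1)]
    rw [if_pos (Finset.mem_range.2 (b.isLt))]
    simp

lemma nodup_of_occ {n : ℕ} : ∀ l : List (Perm (Fin n)), (∀ s ∈ l, IsSimple s) →
    (∀ j : ℕ, occC j l ≤ 1) → l.Nodup := by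
  intro l
  induction l with
  | nil => intro _ _; exact List.nodup_nil
  | cons s rest ih =>
    intro h hocc
    obtain ⟨b, hbn, hs⟩ := h s (List.mem_cons_self)
    rw [List.nodup_cons]
    constructor
    · intro hmem
      have h1 := hocc (b:ℕ)
      rw [occ_cons, if_pos (by rw [hs]; exact (occ_pred_iff b hbn _).2 rfl)] at h1
      have h2 : 0 < occC (b:ℕ) rest := by
        rw [occC, List.countP_pos_iff]
        exact ⟨s, hmem, by simp only [decide_eq_true_eq]; rw [hs]; exact (occ_pred_iff b hbn _).2 rfl⟩
      omega
    · exact ih (fun t ht => h t (List.mem_cons_of_mem _ ht))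
        (fun j => le_trans (by rw [occ_cons]; omega) (hocc j))

lemma card_lt_val {n : ℕ} (v : Perm (Fin n)) (a : Fin n) :
    (univ.filter fun q => v q < a).card = (a:ℕ) := by
  rw [← Fin.card_Iio (b := a)]
  apply Finset.card_nbij (i := fun q => v q)
  · intro q hq
    simp only [Finset.mem_coe, Finset.mem_filter, Finset.mem_univ, true_and] at hq
    simpa [Finset.mem_Iio] using hq
  · exact fun a _ b _ hab => v.injective hab
  · intro x hx
    simp only [Finset.mem_coe, Finset.mem_Iio] at hx
    exact ⟨v.symm x, by simp [Finset.mem_coe, Finset.mem_filter, hx], by simp⟩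

lemma card_lt_pos {n : ℕ} (p : Fin n) :
    (univ.filter fun q => q < p).card = (p:ℕ) := by
  have h : (univ.filter fun q => q < p) = Finset.Iio p := by
    ext x; simp [Finset.mem_Iio]
  rw [h, Fin.card_Iio]

lemma card_le_val {n : ℕ} (v : Perm (Fin n)) (j : ℕ) :
    (univ.filter fun q => (v q : ℕ) ≤ j).card = (univ.filter fun x : Fin n => (x:ℕ) ≤ j).card := by
  apply Finset.card_nbij (i := fun q => v q)
  · intro q hq
    simp only [Finset.mem_coe, Finset.mem_filter, Finset.mem_univ, true_and] at hq ⊢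
    exact hq
  · exact fun a _ b _ hab => v.injective hab
  · intro x hx
    simp only [Finset.mem_coe, Finset.mem_filter, Finset.mem_univ, true_and] at hx
    exact ⟨v.symm x, by simp [Finset.mem_coe, Finset.mem_filter, hx], by simp⟩

lemma fiber_ge {n : ℕ} (v : Perm (Fin n)) (p : Fin n) :
    (v p : ℕ) ≤ (p:ℕ) + (univ.filter fun q => p < q ∧ v q < v p).card := by
  have h1 : (univ.filter fun q => v q < v p).card = ((v p : ℕ)) := card_lt_val v (v p)
  have h2 : (univ.filter fun q => v q < v p)
      ⊆ (univ.filter fun q => q < p) ∪ (univ.filter fun q => p < q ∧ v q < v p) := by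
    intro q hq
    simp only [mem_filter, mem_univ, true_and, Finset.mem_union] at hq ⊢
    rcases lt_trichotomy q p with h | rfl | h
    · exact Or.inl h
    · exact absurd hq (lt_irrefl _)
    · exact Or.inr ⟨h, hq⟩
  have h3 := Finset.card_le_card h2
  have h4 := Finset.card_union_le (univ.filter fun q : Fin n => q < p)
    (univ.filter fun q => p < q ∧ v q < v p)
  rw [h1] at h3
  rw [card_lt_pos] at h4
  omega

lemma fiber_eq_of_avoids321 {n : ℕ} (v : Perm (Fin n)) (h321 : avoids321 v) (p : Fin n) :
    (univ.filter fun q => p < q ∧ v q < v p).card = (v p : ℕ) - (p:ℕ) := by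
  have hge := fiber_ge v p
  rcases Nat.eq_zero_or_pos (univ.filter fun q => p < q ∧ v q < v p).card with h0 | hpos
  · omega
  · -- there is q0 > p with v q0 < v p
    obtain ⟨q0, hq0⟩ := Finset.card_pos.1 hpos
    simp only [mem_filter, mem_univ, true_and] at hq0
    have hall : ∀ q, q < p → v q < v p := by
      intro q hq
      by_contra hnot
      have hne : v q ≠ v p := fun he => absurd (v.injective he) (ne_of_lt hq)
      have : v p < v q := lt_of_le_of_ne (not_lt.1 hnot) (Ne.symm hne)
      exact h321 ⟨q, p, q0, hq, hq0.1, hq0.2, this⟩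
    have hsub : (univ.filter fun q : Fin n => q < p) ∪ (univ.filter fun q => p < q ∧ v q < v p)
        ⊆ (univ.filter fun q => v q < v p) := by
      intro q hq
      simp only [mem_filter, mem_univ, true_and, Finset.mem_union] at hq ⊢
      rcases hq with h | h
      · exact hall q h
      · exact h.2
    have hdisj : Disjoint (univ.filter fun q : Fin n => q < p)
        (univ.filter fun q => p < q ∧ v q < v p) := by
      rw [Finset.disjoint_left]
      intro q hq1 hq2
      simp only [mem_filter, mem_univ, true_and] at hq1 hq2
      exact absurd (lt_trans hq1 hq2.1) (lt_irrefl _)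
    have hcard := Finset.card_le_card hsub
    have hA : (univ.filter fun q => v q < v p).card = ((v p : ℕ)) := card_lt_val v (v p)
    rw [Finset.card_union_of_disjoint hdisj, card_lt_pos, hA] at hcard
    omega

lemma len_eq_sum_fiber {n : ℕ} (v : Perm (Fin n)) :
    len v = ∑ p : Fin n, (univ.filter fun q => p < q ∧ v q < v p).card := by
  rw [len, Finset.card_filter, ← Finset.univ_product_univ, Finset.sum_product]
  congr 1
  ext p
  rw [Finset.card_filter]

lemma len_eq_sum_disp {n : ℕ} (v : Perm (Fin n)) (h321 : avoids321 v) :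
    len v = ∑ p : Fin n, ((v p : ℕ) - (p:ℕ)) := by
  rw [len_eq_sum_fiber]
  exact Finset.sum_congr rfl fun p _ => fiber_eq_of_avoids321 v h321 p

lemma sum_Dst {n : ℕ} (v : Perm (Fin n)) :
    ∑ j ∈ Finset.range n, Dst j v = ∑ p : Fin n, ((v p : ℕ) - (p:ℕ)) := by
  unfold Dst
  simp_rw [Finset.card_filter]
  rw [Finset.sum_comm]
  apply Finset.sum_congr rfl
  intro p _
  have h : (Finset.range n).filter (fun j => (p:ℕ) ≤ j ∧ j < ((v p):ℕ)) =
      Finset.Ico (p:ℕ) ((v p):ℕ) := by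
    ext j
    simp only [Finset.mem_filter, Finset.mem_range, Finset.mem_Ico]
    have := (v p).isLt
    omega
  rw [← Finset.card_filter, h, Nat.card_Ico]

lemma two_mem {α : Type*} [LinearOrder α] {s : Finset α} (h : 1 < s.card) :
    ∃ x ∈ s, ∃ y ∈ s, x < y := by
  obtain ⟨a, ha, b, hb, hne⟩ := Finset.one_lt_card.1 h
  rcases lt_or_gt_of_ne hne with hl | hl
  · exact ⟨a, ha, b, hb, hl⟩
  · exact ⟨b, hb, a, ha, hl⟩

lemma Dst_le_one {n : ℕ} (v : Perm (Fin n)) (h321 : avoids321 v) (h3412 : avoids3412 v)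
    (j : ℕ) : Dst j v ≤ 1 := by
  by_contra hge
  push_neg at hge
  set DA := univ.filter (fun p : Fin n => (p:ℕ) ≤ j ∧ j < ((v p):ℕ)) with hDA
  set DB := univ.filter (fun q : Fin n => j < (q:ℕ) ∧ ((v q):ℕ) ≤ j) with hDB
  set C1 := univ.filter (fun p : Fin n => (p:ℕ) ≤ j ∧ ((v p):ℕ) ≤ j) with hC1
  have hDstA : Dst j v = DA.card := rfl
  have h1 : DA.card + C1.card = (univ.filter fun p : Fin n => (p:ℕ) ≤ j).card := by
    rw [← Finset.card_union_of_disjoint (by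
      rw [Finset.disjoint_left]
      intro p hp1 hp2
      simp only [hDA, hC1, mem_filter, mem_univ, true_and] at hp1 hp2
      omega)]
    congr 1
    ext p
    simp only [hDA, hC1, Finset.mem_union, mem_filter, mem_univ, true_and]
    omega
  have h2 : DB.card + C1.card = (univ.filter fun q : Fin n => ((v q):ℕ) ≤ j).card := by
    rw [← Finset.card_union_of_disjoint (by
      rw [Finset.disjoint_left]
      intro p hp1 hp2
      simp only [hDB, hC1, mem_filter, mem_univ, true_and] at hp1 hp2
      omega)]
    congr 1
    ext p
    simp only [hDB, hC1, Finset.mem_union, mem_filter, mem_univ, true_and]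
    omega
  have h3 := card_le_val v j
  have hBge : 1 < DB.card := by omega
  rw [hDstA] at hge
  obtain ⟨p1, hp1, p2, hp2, hp12⟩ := two_mem hge
  obtain ⟨q1, hq1, q2, hq2, hq12⟩ := two_mem hBge
  simp only [hDA, mem_filter, mem_univ, true_and] at hp1 hp2
  simp only [hDB, mem_filter, mem_univ, true_and] at hq1 hq2
  have hp2q1 : p2 < q1 := by rw [Fin.lt_def]; omega
  have hvq1p2 : v q1 < v p2 := by rw [Fin.lt_def]; omega
  have hvq2p1 : v q2 < v p1 := by rw [Fin.lt_def]; omega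
  rcases lt_trichotomy (v p1) (v p2) with hv12 | hv12 | hv12
  · rcases lt_trichotomy (v q1) (v q2) with hw12 | hw12 | hw12
    · exact h3412 ⟨p1, p2, q1, q2, hp12, hp2q1, hq12, hw12, hvq2p1, hv12⟩
    · exact absurd (v.injective hw12) (ne_of_lt hq12)
    · exact h321 ⟨p2, q1, q2, hp2q1, hq12, hw12, hvq1p2⟩
  · exact absurd (v.injective hv12) (ne_of_lt hp12)
  · exact h321 ⟨p1, p2, q1, hp12, hp2q1, hvq1p2, hv12⟩

lemma seg_iff {n : ℕ} (v : Perm (Fin n)) (j : ℕ) (h : Dst j v = 0) (p : Fin n) :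
    ((p:ℕ) ≤ j ↔ ((v p):ℕ) ≤ j) := by
  have hemp : (univ.filter fun p : Fin n => (p:ℕ) ≤ j ∧ j < ((v p):ℕ)) = ∅ :=
    Finset.card_eq_zero.1 h
  have hfwd : ∀ q : Fin n, (q:ℕ) ≤ j → ((v q):ℕ) ≤ j := by
    intro q hq
    by_contra hc
    have hmem : q ∈ (univ.filter fun p : Fin n => (p:ℕ) ≤ j ∧ j < ((v p):ℕ)) := by
      simp only [mem_filter, mem_univ, true_and]
      omega
    rw [hemp] at hmem
    exact absurd hmem (Finset.notMem_empty q)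
  constructor
  · exact hfwd p
  · intro hvp
    by_contra hp
    set S := univ.filter (fun x : Fin n => (x:ℕ) ≤ j) with hS
    have hsub : S.image v ⊆ S := by
      intro y hy
      obtain ⟨x, hx, rfl⟩ := Finset.mem_image.1 hy
      simp only [hS, mem_filter, mem_univ, true_and] at hx ⊢
      exact hfwd x hx
    have hcard : S.card ≤ (S.image v).card := by
      rw [Finset.card_image_of_injective _ v.injective]
    have heq : S.image v = S := Finset.eq_of_subset_of_card_le hsub hcard
    have hin : v p ∈ S := by simp only [hS, mem_filter, mem_univ, true_and]; exact hvp
    rw [← heq] at hin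
    obtain ⟨x, hx, hxe⟩ := Finset.mem_image.1 hin
    have := v.injective hxe
    subst this
    simp only [hS, mem_filter, mem_univ, true_and] at hx
    omega

lemma avoids_one {n : ℕ} : avoids321 (1 : Perm (Fin n)) ∧ avoids3412 (1 : Perm (Fin n)) := by
  constructor
  · rintro ⟨a, c, d, h1, h2, h3, h4⟩
    simp only [Perm.one_apply] at h3 h4
    exact absurd h3 (asymm h2)
  · rintro ⟨a, c, d, e, h1, h2, h3, h4, h5, h6⟩
    simp only [Perm.one_apply] at h4 h5 h6
    have : a < e := lt_trans (lt_trans h1 h2) h3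
    exact absurd h5 (asymm this)

lemma reduced_nodup_avoids {n : ℕ} : ∀ l : List (Perm (Fin n)), (∀ s ∈ l, IsSimple s) →
    len l.prod = l.length → l.Nodup → avoids321 l.prod ∧ avoids3412 l.prod := by
  intro l
  induction l with
  | nil => intro _ _ _; simpa using avoids_one
  | cons s rest ih =>
    intro hl hlen hnd
    obtain ⟨b, hbn, rfl⟩ := hl s (List.mem_cons_self)
    set b1 : Fin n := ⟨(b:ℕ)+1, hbn⟩ with hb1def
    have hb1v : (b1:ℕ) = (b:ℕ)+1 := rfl
    rw [List.prod_cons] at hlen ⊢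
    set v := rest.prod with hvdef
    set w := Equiv.swap b b1 * v with hwdef
    have hrl : ∀ t ∈ rest, IsSimple t := fun t ht => hl t (List.mem_cons_of_mem _ ht)
    have hvle : len v ≤ rest.length := len_prod_le rest hrl
    have hwle : len w ≤ len v + 1 := (len_swap_le v b b1 hb1v).1
    have hlv : len v = rest.length := by
      rw [List.length_cons] at hlen
      omega
    obtain ⟨hav321, hav3412⟩ := ih hrl hlv (List.nodup_cons.1 hnd).2
    have hsmem : Equiv.swap b b1 ∉ rest := (List.nodup_cons.1 hnd).1
    have hocc0 : occC (b:ℕ) rest = 0 := by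
      rw [occC, List.countP_eq_zero]
      intro a ha
      simp only [decide_eq_true_eq]
      rintro ⟨h, heq⟩
      apply hsmem
      have heq' : a = Equiv.swap b b1 := heq
      rwa [← heq']
    have hDst0 : Dst (b:ℕ) v = 0 := by
      have := Dst_le_occ rest hrl (b:ℕ)
      rw [← hvdef] at this
      omega
    have hseg : ∀ p : Fin n, ((p:ℕ) ≤ (b:ℕ) ↔ ((v p):ℕ) ≤ (b:ℕ)) := seg_iff v (b:ℕ) hDst0
    have hw : ∀ x, w x = Equiv.swap b b1 (v x) := fun x => rfl
    have horient : ∀ x y : Fin n, x < y → v x = b1 → v y = b → False := by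
      intro x y hxy hx1 hy1
      have h1 : ((v x):ℕ) = (b:ℕ)+1 := by rw [hx1]
      have h2 : ((v y):ℕ) = (b:ℕ) := by rw [hy1]
      have h3 : ¬ ((x:ℕ) ≤ (b:ℕ)) := fun hh => by have := (hseg x).1 hh; omega
      have h4 : (y:ℕ) ≤ (b:ℕ) := (hseg y).2 (by omega)
      rw [Fin.lt_def] at hxy
      omega
    have htrans : ∀ x y : Fin n, x < y → ¬(v x = b ∧ v y = b1) →
        ((w x < w y) ↔ v x < v y) := by
      intro x y hxy hnb
      rw [hw x, hw y]
      exact swap_lt_iff b b1 hb1v (v x) (v y) hnb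
        (fun ⟨h1', h2'⟩ => horient x y hxy h2' h1')
    have hrev : ∀ x y : Fin n, x < y → ¬(v x = b ∧ v y = b1) → (w y < w x) → v y < v x := by
      intro x y hxy hnb hlt
      rcases lt_trichotomy (v x) (v y) with h | h | h
      · exact absurd ((htrans x y hxy hnb).2 h) (asymm hlt)
      · exact absurd (v.injective h) (ne_of_lt hxy)
      · exact h
    have hlow : ∀ x : Fin n, ((w x):ℕ) < (b:ℕ) → ((v x):ℕ) < (b:ℕ) ∧ (x:ℕ) ≤ (b:ℕ) := by
      intro x hx
      rcases eq_or_ne (v x) b with hvb | hvb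
      · rw [hw x, hvb, Equiv.swap_apply_left] at hx
        rw [hb1v] at hx; omega
      rcases eq_or_ne (v x) b1 with hvb1 | hvb1
      · rw [hw x, hvb1, Equiv.swap_apply_right] at hx
        omega
      · rw [hw x, Equiv.swap_apply_of_ne_of_ne hvb hvb1] at hx
        exact ⟨hx, (hseg x).2 (by omega)⟩
    have hhigh : ∀ x : Fin n, (b:ℕ)+1 < ((w x):ℕ) → (b:ℕ) < ((v x):ℕ) ∧ (b:ℕ) < (x:ℕ) := by
      intro x hx
      rcases eq_or_ne (v x) b with hvb | hvb
      · rw [hw x, hvb, Equiv.swap_apply_left] at hx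
        rw [hb1v] at hx; omega
      rcases eq_or_ne (v x) b1 with hvb1 | hvb1
      · rw [hw x, hvb1, Equiv.swap_apply_right] at hx
        omega
      · rw [hw x, Equiv.swap_apply_of_ne_of_ne hvb hvb1] at hx
        have h1 : ¬ ((v x):ℕ) ≤ (b:ℕ) := by omega
        have h2 : ¬ ((x:ℕ) ≤ (b:ℕ)) := fun hh => h1 ((hseg x).1 hh)
        omega
    constructor
    · -- avoids321 w
      rintro ⟨p1, p2, p3, h12, h23, hw32, hw21⟩
      by_cases B1 : v p1 = b ∧ v p2 = b1
      · -- w p1 = b1, w p2 = b, w p3 < b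
        have hwp2 : w p2 = b := by rw [hw p2, B1.2, Equiv.swap_apply_right]
        have hp3 : ((w p3):ℕ) < (b:ℕ) := by
          have := Fin.lt_def.1 hw32
          rw [hwp2] at this
          exact this
        obtain ⟨_, hp3b⟩ := hlow p3 hp3
        have hp2b : ¬ ((p2:ℕ)) ≤ (b:ℕ) := by
          intro hh
          have := (hseg p2).1 hh
          rw [B1.2] at this
          rw [hb1v] at this
          omega
        have := Fin.lt_def.1 h23
        omega
      by_cases B2 : v p2 = b ∧ v p3 = b1
      · -- w p2 = b1, w p1 > b1
        have hwp2 : w p2 = b1 := by rw [hw p2, B2.1, Equiv.swap_apply_left]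
        have hp1 : (b:ℕ)+1 < ((w p1):ℕ) := by
          have := Fin.lt_def.1 hw21
          rw [hwp2] at this
          rw [hb1v] at this
          omega
        obtain ⟨_, hp1b⟩ := hhigh p1 hp1
        have hp2b : ((p2:ℕ)) ≤ (b:ℕ) := (hseg p2).2 (by rw [B2.1])
        have := Fin.lt_def.1 h12
        omega
      by_cases B3 : v p1 = b ∧ v p3 = b1
      · have hwp1 : w p1 = b1 := by rw [hw p1, B3.1, Equiv.swap_apply_left]
        have hwp3 : w p3 = b := by rw [hw p3, B3.2, Equiv.swap_apply_right]
        have ha := Fin.lt_def.1 hw32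
        have hb' := Fin.lt_def.1 hw21
        rw [hwp1] at hb'
        rw [hwp3] at ha
        rw [hb1v] at hb'
        omega
      · have hv21 := hrev p1 p2 h12 B1 hw21
        have hv32 := hrev p2 p3 h23 B2 hw32
        exact hav321 ⟨p1, p2, p3, h12, h23, hv32, hv21⟩
    · -- avoids3412 w
      rintro ⟨p1, p2, p3, p4, h12, h23, h34, hA, hB, hC⟩
      -- hA : w p3 < w p4, hB : w p4 < w p1, hC : w p1 < w p2
      by_cases C13 : v p1 = b ∧ v p3 = b1
      · have hwp1 : w p1 = b1 := by rw [hw p1, C13.1, Equiv.swap_apply_left]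
        have hwp3 : w p3 = b := by rw [hw p3, C13.2, Equiv.swap_apply_right]
        have h1 := Fin.lt_def.1 hA
        have h2 := Fin.lt_def.1 hB
        rw [hwp3] at h1
        rw [hwp1] at h2
        rw [hb1v] at h2
        omega
      by_cases C24 : v p2 = b ∧ v p4 = b1
      · have hwp2 : w p2 = b1 := by rw [hw p2, C24.1, Equiv.swap_apply_left]
        have hwp4 : w p4 = b := by rw [hw p4, C24.2, Equiv.swap_apply_right]
        have h1 := Fin.lt_def.1 hB
        have h2 := Fin.lt_def.1 hC
        rw [hwp4] at h1
        rw [hwp2] at h2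
        rw [hb1v] at h2
        omega
      by_cases C14 : v p1 = b ∧ v p4 = b1
      · have hwp1 : w p1 = b1 := by rw [hw p1, C14.1, Equiv.swap_apply_left]
        have hwp4 : w p4 = b := by rw [hw p4, C14.2, Equiv.swap_apply_right]
        have h2 : (b:ℕ)+1 < ((w p2):ℕ) := by
          have := Fin.lt_def.1 hC
          rw [hwp1] at this
          rw [hb1v] at this
          omega
        obtain ⟨_, hp2b⟩ := hhigh p2 h2
        have h3 : ((w p3):ℕ) < (b:ℕ) := by
          have := Fin.lt_def.1 hA
          rw [hwp4] at this
          exact this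
        obtain ⟨_, hp3b⟩ := hlow p3 h3
        have := Fin.lt_def.1 h23
        omega
      by_cases C23 : v p2 = b ∧ v p3 = b1
      · have hwp2 : w p2 = b1 := by rw [hw p2, C23.1, Equiv.swap_apply_left]
        have hwp3 : w p3 = b := by rw [hw p3, C23.2, Equiv.swap_apply_right]
        have h1 := Fin.lt_def.1 hA
        have h2 := Fin.lt_def.1 hB
        have h3 := Fin.lt_def.1 hC
        rw [hwp3] at h1
        rw [hwp2] at h3
        rw [hb1v] at h3
        omega
      · have hnb34 : ¬(v p3 = b ∧ v p4 = b1) := by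
          rintro ⟨ha', hb'⟩
          have hwp3 : w p3 = b1 := by rw [hw p3, ha', Equiv.swap_apply_left]
          have hwp4 : w p4 = b := by rw [hw p4, hb', Equiv.swap_apply_right]
          have := Fin.lt_def.1 hA
          rw [hwp3, hwp4] at this
          rw [hb1v] at this
          omega
        have hnb12 : ¬(v p1 = b ∧ v p2 = b1) := by
          rintro ⟨ha', hb'⟩
          have hwp1 : w p1 = b1 := by rw [hw p1, ha', Equiv.swap_apply_left]
          have hwp2 : w p2 = b := by rw [hw p2, hb', Equiv.swap_apply_right]
          have := Fin.lt_def.1 hC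
          rw [hwp1, hwp2] at this
          rw [hb1v] at this
          omega
        have hv34 : v p3 < v p4 := (htrans p3 p4 h34 hnb34).1 hA
        have hv12 : v p1 < v p2 := (htrans p1 p2 h12 hnb12).1 hC
        have h14 : p1 < p4 := lt_trans (lt_trans h12 h23) h34
        have hv41 : v p4 < v p1 := hrev p1 p4 h14 C14 hB
        exact hav3412 ⟨p1, p2, p3, p4, h12, h23, h34, hv34, hv41, hv12⟩

/-- Tenner: `w` avoids 321 and 3412 iff every reduced expression for `w`
contains each simple transposition at most once. -/
theorem avoids321_and_3412_iff_boolean {n : ℕ} (w : Equiv.Perm (Fin n)) :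
    (avoids321 w ∧ avoids3412 w) ↔
      ∀ l : List (Equiv.Perm (Fin n)), (∀ s ∈ l, IsSimple s) → l.prod = w →
        l.length = len w → l.Nodup := by
  constructor
  · rintro ⟨h321, h3412⟩ l hl hp hlen
    apply nodup_of_occ l hl
    have hsum1 : ∑ j ∈ Finset.range n, occC j l = len w := by rw [sum_occ l hl, hlen]
    have hsum2 : ∑ j ∈ Finset.range n, Dst j w = len w := by
      rw [sum_Dst, ← len_eq_sum_disp w h321]
    have hle : ∀ j ∈ Finset.range n, Dst j w ≤ occC j l := by
      intro j _
      have := Dst_le_occ l hl j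
      rwa [hp] at this
    have heq : ∀ j ∈ Finset.range n, Dst j w = occC j l :=
      (Finset.sum_eq_sum_iff_of_le hle).1 (by rw [hsum1, hsum2])
    intro j
    by_cases hj : j ∈ Finset.range n
    · rw [← heq j hj]
      exact Dst_le_one w h321 h3412 j
    · have h0 : occC j l = 0 := by
        rw [occC, List.countP_eq_zero]
        intro a _
        simp only [decide_eq_true_eq, not_exists]
        intro hh _
        rw [Finset.mem_range] at hj
        omega
      omega
  · intro H
    obtain ⟨l, hl, hp, hlen⟩ := exists_reduced (len w) w le_rfl
    have hnd := H l hl hp hlen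
    have := reduced_nodup_avoids l hl (by rw [hp, hlen]) hnd
    rwa [hp] at this
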